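/- Let p be a prime, a ≥ 1 an integer, and k = p^a. Let T ⊆ {0,1,…,k−1} with |T| = δ and p not dividing δ. Then for every complex k-th root of unity ζ, the sum Σ_{j∈T} ζ^j is nonzero; consequently, the k×k circulant matrix C whose first row is the 0/1 indicator vector of T (with each subsequent row the cyclic shift of the previous one by one position) is invertible. -/
import Mathlib

open MeasureTheory Matrix

noncomputable section

open Polynomial in

lemma part1 (p a k δ : ℕ) (hp : p.Prime) (ha : 1 ≤ a) (hk : k = p ^ a)
    [NeZero k] (hpδ : ¬ p ∣ δ) (T : Finset (ZMod k)) (hT : T.card = δ) :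
    ∀ ζ : ℂ, ζ ^ k = 1 → ∑ j ∈ T, ζ ^ (ZMod.val j) ≠ 0 := by
  intro ζ hζ hsum
  haveI := Fact.mk hp
  have hδ0 : δ ≠ 0 := fun h => hpδ (h ▸ dvd_zero p)
  have hk0 : k ≠ 0 := NeZero.ne k
  by_cases h1 : ζ = 1
  · subst h1
    simp only [one_pow, Finset.sum_const, nsmul_eq_mul, mul_one, hT] at hsum
    exact hδ0 (by exact_mod_cast hsum)
  · set n := orderOf ζ with hn
    have hdvd : n ∣ k := orderOf_dvd_of_pow_eq_one hζ
    have hn1 : n ≠ 1 := fun h => h1 (orderOf_eq_one_iff.mp h)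
    have hn0 : n ≠ 0 := by
      have : IsOfFinOrder ζ := isOfFinOrder_iff_pow_eq_one.mpr ⟨k, Nat.pos_of_ne_zero hk0, hζ⟩
      exact this.orderOf_pos.ne'
    obtain ⟨b, hb, hnb⟩ := (Nat.dvd_prime_pow hp).mp (hk ▸ hdvd)
    obtain ⟨b', rfl⟩ : ∃ b', b = b' + 1 := by
      refine ⟨b - 1, ?_⟩
      have : b ≠ 0 := by rintro rfl; exact hn1 (by simpa using hnb)
      omega
    have hprim : IsPrimitiveRoot ζ n := IsPrimitiveRoot.orderOf ζ
    have hpos : 0 < n := Nat.pos_of_ne_zero hn0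
    have hmin : cyclotomic n ℤ = minpoly ℤ ζ := cyclotomic_eq_minpoly hprim hpos
    set P : ℤ[X] := ∑ j ∈ T, X ^ (ZMod.val j) with hP
    have hint : IsIntegral ℤ ζ := hprim.isIntegral hpos
    have hdvdP : cyclotomic n ℤ ∣ P := by
      rw [hmin]
      refine minpoly.isIntegrallyClosed_dvd hint ?_
      simp only [hP, map_sum, aeval_X_pow]
      exact hsum
    have h2 : (p : ℤ) ∣ P.eval 1 := by
      obtain ⟨q, hq⟩ := hdvdP
      rw [hq, eval_mul, hnb, eval_one_cyclotomic_prime_pow]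
      exact Dvd.intro _ rfl
    have h3 : P.eval 1 = (δ : ℤ) := by
      simp [hP, eval_finset_sum, hT]
    rw [h3] at h2
    exact hpδ (Int.natCast_dvd_natCast.mp h2)


lemma part2 (k : ℕ) [NeZero k] (T : Finset (ZMod k))
    (h1 : ∀ ζ : ℂ, ζ ^ k = 1 → ∑ j ∈ T, ζ ^ (ZMod.val j) ≠ 0) :
    IsUnit (Matrix.of fun i j : ZMod k => if j - i ∈ T then (1 : ℝ) else 0).det := by
  have hk0 : k ≠ 0 := NeZero.ne k
  have hkpos : 0 < k := Nat.pos_of_ne_zero hk0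
  set ω : ℂ := Complex.exp (2 * Real.pi * Complex.I / k) with hω
  have hprim : IsPrimitiveRoot ω k := Complex.isPrimitiveRoot_exp k hk0
  have hω1 : ω ^ k = 1 := hprim.pow_eq_one
  set e : ZMod k → ℂ := fun x => ω ^ x.val with he
  have epow : ∀ m : ℕ, e (m : ZMod k) = ω ^ m := by
    intro m
    simp only [he, ZMod.val_natCast]
    exact (pow_eq_pow_mod m hω1).symm
  have eadd : ∀ x y : ZMod k, e (x + y) = e x * e y := by
    intro x y
    have : x + y = ((x.val + y.val : ℕ) : ZMod k) := by
      push_cast [ZMod.natCast_zmod_val]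
      rfl
    rw [this, epow, pow_add]
  have emul : ∀ x y : ZMod k, e (x * y) = (ω ^ y.val) ^ x.val := by
    intro x y
    have : x * y = ((x.val * y.val : ℕ) : ZMod k) := by
      push_cast [ZMod.natCast_zmod_val]
      rfl
    rw [this, epow, mul_comm, pow_mul]
  set C : Matrix (ZMod k) (ZMod k) ℂ :=
    Matrix.of fun i j : ZMod k => if j - i ∈ T then (1 : ℂ) else 0 with hC
  set W : Matrix (ZMod k) (ZMod k) ℂ := Matrix.of fun i j : ZMod k => e (i * j) with hW
  set D : ZMod k → ℂ := fun r => ∑ j ∈ T, e (j * r) with hD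
  -- the diagonalization identity
  have key : C * W = W * Matrix.diagonal D := by
    ext i r
    rw [Matrix.mul_apply, Matrix.mul_diagonal]
    calc ∑ j, C i j * W j r
        = ∑ m, C i (m + i) * W (m + i) r := (Fintype.sum_equiv (Equiv.addRight i) _ _ (fun m => rfl)).symm
      _ = ∑ m, (if m ∈ T then (1:ℂ) else 0) * (e (m * r) * e (i * r)) := by
          refine Finset.sum_congr rfl fun m _ => ?_
          simp only [hC, hW, Matrix.of_apply, add_sub_cancel_right]
          rw [add_mul, eadd]
      _ = W i r * D r := by
          simp only [ite_mul, zero_mul, one_mul, Finset.sum_ite_mem, Finset.univ_inter]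
          rw [← Finset.sum_mul, mul_comm]
          rfl
  -- determinant of W is nonzero
  have hWdet : W.det ≠ 0 := by
    let eqv : Fin k ≃ ZMod k :=
      { toFun := fun i => ((i : ℕ) : ZMod k)
        invFun := fun x => ⟨x.val, ZMod.val_lt x⟩
        left_inv := fun i => by
          ext
          simp [ZMod.val_natCast, Nat.mod_eq_of_lt i.isLt]
        right_inv := fun x => by simp [ZMod.natCast_zmod_val] }
    have hsub : W.submatrix eqv eqv = Matrix.vandermonde (fun i : Fin k => ω ^ (i : ℕ)) := by
      ext i j
      simp only [Matrix.submatrix_apply, hW, Matrix.of_apply, Matrix.vandermonde_apply]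
      show e (((i : ℕ) : ZMod k) * ((j : ℕ) : ZMod k)) = _
      rw [← Nat.cast_mul, epow, pow_mul]
    have hvdm : (Matrix.vandermonde (fun i : Fin k => ω ^ (i : ℕ))).det ≠ 0 := by
      rw [Matrix.det_vandermonde]
      refine Finset.prod_ne_zero_iff.mpr fun i _ => Finset.prod_ne_zero_iff.mpr fun j hj => ?_
      rw [Finset.mem_Ioi] at hj
      refine sub_ne_zero_of_ne fun hh => ?_
      exact hj.ne' (Fin.ext (hprim.pow_inj j.isLt i.isLt hh))
    rw [← Matrix.det_submatrix_equiv_self eqv, hsub]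
    exact hvdm
  have hdet : C.det * W.det = W.det * ∏ r, D r := by
    rw [← Matrix.det_mul, key, Matrix.det_mul, Matrix.det_diagonal]
  have hDne : ∀ r : ZMod k, D r ≠ 0 := by
    intro r
    have hz : (ω ^ r.val) ^ k = 1 := by
      rw [← pow_mul, mul_comm, pow_mul, hω1, one_pow]
    have := h1 (ω ^ r.val) hz
    simpa only [hD, emul] using this
  have hCdet : C.det ≠ 0 := by
    have hprod : (∏ r : ZMod k, D r) ≠ 0 :=
      Finset.prod_ne_zero_iff.mpr fun r _ => hDne r
    intro h
    rw [h, zero_mul] at hdet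
    exact (mul_ne_zero hWdet hprod) hdet.symm
  have hmap : (Matrix.of fun i j : ZMod k => if j - i ∈ T then (1:ℝ) else 0).map
      (Complex.ofRealHom : ℝ →+* ℂ) = C := by
    ext i j
    simp [hC, apply_ite Complex.ofReal]
  rw [isUnit_iff_ne_zero]
  intro h0
  apply hCdet
  rw [← hmap, ← RingHom.mapMatrix_apply, ← RingHom.map_det, h0, map_zero]


/-- for `k = p^a` (`p` prime) and `T ⊆ ℤ_k` of size `δ` with
`p ∤ δ`, every `k`-th root of unity `ζ` satisfies `∑_{j ∈ T} ζ^j ≠ 0`, and the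
`k × k` circulant matrix with first row the indicator of `T` is invertible. -/
theorem stmt12 (p a k δ : ℕ) (hp : p.Prime) (ha : 1 ≤ a) (hk : k = p ^ a)
    [NeZero k] (hpδ : ¬ p ∣ δ)
    (T : Finset (ZMod k)) (hT : T.card = δ) :
    (∀ ζ : ℂ, ζ ^ k = 1 → ∑ j ∈ T, ζ ^ (ZMod.val j) ≠ 0) ∧
    IsUnit (Matrix.of fun i j : ZMod k => if j - i ∈ T then (1 : ℝ) else 0).det := by
  have h1 := part1 p a k δ hp ha hk hpδ T hT
  exact ⟨h1, part2 k T h1⟩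

end
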